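/- Max-plus spectral radius via traces equals the maximum cycle mean: for A : ℝ^{n×n}, λ = max_{1≤m≤n} (1/m)·maxᵢ (Aᵐ)ᵢᵢ equals the maximum over all sequences i₁,…,iₘ of indices (1 ≤ m ≤ n) of the average (a_{i₁i₂} + a_{i₂i₃} + ⋯ + a_{iₘi₁})/m. -/

import Mathlib

noncomputable def msup {n : ℕ} (hn : 0 < n) (f : Fin n → ℝ) : ℝ :=
  Finset.univ.sup' (Finset.univ_nonempty_iff.mpr (Fin.pos_iff_nonempty.mp hn)) f

noncomputable def minf {n : ℕ} (hn : 0 < n) (f : Fin n → ℝ) : ℝ :=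
  Finset.univ.inf' (Finset.univ_nonempty_iff.mpr (Fin.pos_iff_nonempty.mp hn)) f

noncomputable def mpMul {n : ℕ} (hn : 0 < n) (A B : Fin n → Fin n → ℝ) :
    Fin n → Fin n → ℝ :=
  fun i j => msup hn (fun k => A i k + B k j)

noncomputable def mpPow {n : ℕ} (hn : 0 < n) (A : Fin n → Fin n → ℝ) : ℕ → Fin n → Fin n → ℝ
  | 0 => A
  | 1 => A
  | (m + 2) => mpMul hn A (mpPow hn A (m + 1))

lemma mpKey {n : ℕ} (hn : 0 < n) (A : Fin n → Fin n → ℝ) :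
    ∀ m : ℕ, ∀ i j : Fin n,
      IsGreatest {s : ℝ | ∃ w : ℕ → Fin n, w 0 = i ∧ w (m + 1) = j ∧
          s = ∑ t ∈ Finset.range (m + 1), A (w t) (w (t + 1))} (mpPow hn A (m + 1) i j) := by
  intro m
  induction m with
  | zero =>
    intro i j
    constructor
    · exact ⟨fun t => if t = 0 then i else j, by simp, by simp, by simp [mpPow]⟩
    · rintro s ⟨w, h0, h1, rfl⟩
      simp [mpPow, Finset.sum_range_one, h0, h1]
  | succ m ih =>
    intro i j
    have hdef : mpPow hn A (m + 2) i j = msup hn (fun k => A i k + mpPow hn A (m + 1) k j) := rfl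
    have hne : (Finset.univ : Finset (Fin n)).Nonempty :=
      Finset.univ_nonempty_iff.mpr (Fin.pos_iff_nonempty.mp hn)
    constructor
    · obtain ⟨k, -, hk⟩ := Finset.exists_mem_eq_sup' hne (fun k => A i k + mpPow hn A (m + 1) k j)
      obtain ⟨w, hw0, hwm, hws⟩ := (ih k j).1
      have hk' : msup hn (fun k => A i k + mpPow hn A (m + 1) k j)
          = A i k + mpPow hn A (m + 1) k j := hk
      refine ⟨fun t => if t = 0 then i else w (t - 1), by simp, by simp [hwm], ?_⟩
      rw [hdef, hk', Finset.sum_range_succ']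
      simp only [Nat.succ_ne_zero, if_false, Nat.add_sub_cancel, if_pos rfl]
      rw [hw0, ← hws, add_comm]
      norm_num
    · rintro s ⟨w, h0, h1, rfl⟩
      rw [Finset.sum_range_succ']
      have hle : (∑ t ∈ Finset.range (m + 1), A (w (t + 1)) (w (t + 1 + 1)))
          ≤ mpPow hn A (m + 1) (w 1) j := by
        apply (ih (w 1) j).2
        exact ⟨fun t => w (t + 1), rfl, h1, rfl⟩
      have hsup : A i (w 1) + mpPow hn A (m + 1) (w 1) j
          ≤ msup hn (fun k => A i k + mpPow hn A (m + 1) k j) :=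
        Finset.le_sup' (fun k => A i k + mpPow hn A (m + 1) k j) (Finset.mem_univ (w 1))
      rw [hdef]
      calc (∑ t ∈ Finset.range (m + 1), A (w (t + 1)) (w (t + 1 + 1))) + A (w 0) (w 1)
          ≤ mpPow hn A (m + 1) (w 1) j + A i (w 1) := by rw [h0]; linarith
        _ ≤ _ := by rw [add_comm]; exact hsup

theorem stmt15 {n : ℕ} (hn : 0 < n) (A : Fin n → Fin n → ℝ) (lam : ℝ)
    (hlam : lam = (Finset.Icc 1 n).sup' (Finset.nonempty_Icc.mpr hn)
      (fun m => (1 / (m : ℝ)) * msup hn (fun i => mpPow hn A m i i))) :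
    (∀ m, 1 ≤ m → ∀ i : Fin n,
        IsGreatest {s : ℝ | ∃ w : ℕ → Fin n, w 0 = i ∧ w m = i ∧
            s = ∑ t ∈ Finset.range m, A (w t) (w (t + 1))}
          (mpPow hn A m i i)) ∧
      IsGreatest {r : ℝ | ∃ m, 1 ≤ m ∧ m ≤ n ∧ ∃ w : ℕ → Fin n, w m = w 0 ∧
          r = (∑ t ∈ Finset.range m, A (w t) (w (t + 1))) / (m : ℝ)} lam := by
  have hne : (Finset.univ : Finset (Fin n)).Nonempty :=
    Finset.univ_nonempty_iff.mpr (Fin.pos_iff_nonempty.mp hn)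
  have part1 : ∀ m, 1 ≤ m → ∀ i : Fin n,
      IsGreatest {s : ℝ | ∃ w : ℕ → Fin n, w 0 = i ∧ w m = i ∧
          s = ∑ t ∈ Finset.range m, A (w t) (w (t + 1))} (mpPow hn A m i i) := by
    intro m hm i
    obtain ⟨k, rfl⟩ : ∃ k, m = k + 1 := ⟨m - 1, (Nat.succ_pred_eq_of_pos hm).symm⟩
    exact mpKey hn A k i i
  refine ⟨part1, ?_, ?_⟩
  · -- membership
    obtain ⟨m, hmem, hm⟩ := Finset.exists_mem_eq_sup' (Finset.nonempty_Icc.mpr hn)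
      (fun m : ℕ => (1 / (m : ℝ)) * msup hn (fun i => mpPow hn A m i i))
    rw [Finset.mem_Icc] at hmem
    obtain ⟨i, -, hi⟩ := Finset.exists_mem_eq_sup' hne (fun i => mpPow hn A m i i)
    obtain ⟨w, hw0, hwm, hws⟩ := (part1 m hmem.1 i).1
    have hi' : msup hn (fun i => mpPow hn A m i i) = mpPow hn A m i i := hi
    refine ⟨m, hmem.1, hmem.2, w, by rw [hw0, hwm], ?_⟩
    rw [hlam, hm, hi', hws]
    ring
  · rintro r ⟨m, hm1, hmn, w, hw, rfl⟩
    have hmpos : (0 : ℝ) < m := by exact_mod_cast hm1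
    have hle : (∑ t ∈ Finset.range m, A (w t) (w (t + 1))) ≤ mpPow hn A m (w 0) (w 0) :=
      (part1 m hm1 (w 0)).2 ⟨w, rfl, hw, rfl⟩
    have hle2 : mpPow hn A m (w 0) (w 0) ≤ msup hn (fun i => mpPow hn A m i i) :=
      Finset.le_sup' (fun i => mpPow hn A m i i) (Finset.mem_univ (w 0))
    have hle3 : (1 / (m : ℝ)) * msup hn (fun i => mpPow hn A m i i) ≤ lam := by
      rw [hlam]
      exact Finset.le_sup' (fun m : ℕ => (1 / (m : ℝ)) * msup hn fun i => mpPow hn A m i i)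
        (Finset.mem_Icc.mpr ⟨hm1, hmn⟩)
    calc (∑ t ∈ Finset.range m, A (w t) (w (t + 1))) / (m : ℝ)
        ≤ msup hn (fun i => mpPow hn A m i i) / (m : ℝ) := by
          exact (div_le_div_iff_of_pos_right hmpos).mpr (by linarith)
        _ = (1 / (m : ℝ)) * msup hn (fun i => mpPow hn A m i i) := by ring
        _ ≤ lam := hle3
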